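/- Let T be a trie and let p and q be palindromes such that p is a proper prefix of q and q occurs in T (i.e., pref_{|q|}(u) = q for some node u). Then the number of nodes u of T at which p occurs (i.e., with pref_{|p|}(u) = p) is strictly greater than the number of nodes u at which q occurs. Consequently, two distinct palindromes in Substr(T), one of which is a proper prefix of the other, never have the same set of occurrence nodes in T. -/
import Mathlib


/-- A trie over alphabet `α`: a finite rooted tree with a parent function,
every node reaches the root by iterating `par`, each non-root node carries the
label of the edge to its parent, and distinct children of a node have
distinct labels. -/
structure Trie (α : Type*) where
  V : Type
  fV : Fintype V
  dV : DecidableEq V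
  root : V
  par : V → V
  lab : V → α
  par_root : par root = root
  reaches_root : ∀ v : V, ∃ k : ℕ, par^[k] v = root
  distinct_labels : ∀ u v : V, u ≠ root → v ≠ root →
    par u = par v → lab u = lab v → u = v

attribute [instance] Trie.fV Trie.dV

namespace Trie

variable {α : Type*}

/-- The depth of a node: its distance to the root. -/
noncomputable def depth (T : Trie α) (v : T.V) : ℕ :=
  Nat.find (T.reaches_root v)

/-- `pref T u k` is the string of the `k` edge labels on the path from `u`
towards the root (read upward). -/
def pref (T : Trie α) : T.V → ℕ → List α
  | _, 0 => []
  | u, k + 1 => T.lab u :: T.pref (T.par u) k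

/-- A string `w` occurs at node `u` of the trie `T` if the upward path of
length `|w|` starting at `u` spells out `w`. -/
noncomputable def OccursAtNode (T : Trie α) (w : List α) (u : T.V) : Prop :=
  w.length ≤ T.depth u ∧ T.pref u w.length = w

end Trie


namespace Trie
variable {α : Type*} (T : Trie α)

lemma pref_length (u : T.V) (k : ℕ) : (T.pref u k).length = k := by
  induction k generalizing u with
  | zero => rfl
  | succ k ih => simp [Trie.pref, ih]

lemma pref_add (u : T.V) (j m : ℕ) :
    T.pref u (j + m) = T.pref u j ++ T.pref (T.par^[j] u) m := by
  induction j generalizing u with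
  | zero => simp [Trie.pref]
  | succ j ih =>
      rw [Nat.succ_add]
      simp only [Trie.pref, ih (T.par u), Function.iterate_succ_apply]
      rfl

lemma par_iterate_root (k : ℕ) : T.par^[k] T.root = T.root := by
  induction k with
  | zero => rfl
  | succ k ih => rw [Function.iterate_succ_apply, T.par_root, ih]

lemma depth_spec (u : T.V) : T.par^[T.depth u] u = T.root :=
  Nat.find_spec (T.reaches_root u)

lemma depth_le (u : T.V) {k : ℕ} (h : T.par^[k] u = T.root) : T.depth u ≤ k :=
  Nat.find_min' (T.reaches_root u) h

lemma depth_iterate (u : T.V) {j : ℕ} (hj : j ≤ T.depth u) :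
    T.depth (T.par^[j] u) = T.depth u - j := by
  apply le_antisymm
  · apply T.depth_le
    rw [← Function.iterate_add_apply, Nat.sub_add_cancel hj]
    exact T.depth_spec u
  · have h : T.par^[T.depth (T.par^[j] u) + j] u = T.root := by
      rw [Function.iterate_add_apply]
      exact T.depth_spec _
    have := T.depth_le u h
    omega
end Trie

/-- If `p` and `q` are palindromes, `p` is a proper prefix of `q`, and `q`
occurs in the trie `T`, then the number of nodes at which `p` occurs is
strictly greater than the number of nodes at which `q` occurs; in particular
the two occurrence sets differ. -/
theorem occ_nodes_proper_prefix_palindromes {α : Type*} (T : Trie α)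
    (p q : List α) (hp : p = p.reverse) (hq : q = q.reverse)
    (hpq : p <+: q) (hlen : p.length < q.length)
    (hocc : ∃ u : T.V, T.OccursAtNode q u) :
    Set.ncard { u : T.V | T.OccursAtNode p u } >
      Set.ncard { u : T.V | T.OccursAtNode q u } ∧
    { u : T.V | T.OccursAtNode p u } ≠ { u : T.V | T.OccursAtNode q u } := by
  classical
  set d := q.length - p.length with hd
  have hdpos : 0 < d := by omega
  have hple : p.length ≤ q.length := hlen.le
  have hpd : p.length + d = q.length := by omega
  -- q.take p.length = p and q.drop d = p
  have hsuf : p <:+ q := by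
    rw [hp, hq]; exact List.reverse_suffix.mpr hpq
  obtain ⟨t, ht⟩ := hpq
  obtain ⟨s, hs⟩ := hsuf
  have hslen : s.length = d := by
    have := congrArg List.length hs
    simp at this; omega
  have hdrop : q.drop d = p := by
    rw [← hs, ← hslen, List.drop_left]
  -- q occurrence implies p occurrence
  have hsub : { u : T.V | T.OccursAtNode q u } ⊆ { u : T.V | T.OccursAtNode p u } := by
    rintro u ⟨h1, h2⟩
    refine ⟨le_trans (by omega) h1, ?_⟩
    have := T.pref_add u p.length d
    rw [hpd, h2, ← ht] at this
    exact (List.append_inj this (by simp [T.pref_length])).1.symm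
  -- q occurrence at u implies p occurrence at par^[d] u, at strictly smaller depth
  have hanc : ∀ u : T.V, T.OccursAtNode q u →
      T.OccursAtNode p (T.par^[d] u) ∧ T.depth (T.par^[d] u) = T.depth u - d := by
    rintro u ⟨h1, h2⟩
    have hdep : T.depth (T.par^[d] u) = T.depth u - d :=
      T.depth_iterate u (by omega)
    refine ⟨⟨by omega, ?_⟩, hdep⟩
    have := T.pref_add u d p.length
    rw [Nat.add_comm d p.length, hpd, h2] at this
    have h3 : q.drop d = T.pref (T.par^[d] u) p.length := by
      rw [this, List.drop_left' (T.pref_length u d)]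
    rw [← h3, hdrop]
  -- pick a q-occurrence of minimal depth
  obtain ⟨u0, hu0⟩ := hocc
  have hex : ∃ n, ∃ u : T.V, T.OccursAtNode q u ∧ T.depth u = n :=
    ⟨T.depth u0, u0, hu0, rfl⟩
  obtain ⟨u, hu, hun⟩ := Nat.find_spec hex
  have hmin : ∀ u' : T.V, T.OccursAtNode q u' → Nat.find hex ≤ T.depth u' := by
    intro u' hu'
    by_contra h
    exact Nat.find_min hex (by omega) ⟨u', hu', rfl⟩
  obtain ⟨hv, hvd⟩ := hanc u hu
  have hvq : T.par^[d] u ∉ { u : T.V | T.OccursAtNode q u } := by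
    intro hmem
    have := hmin _ hmem
    have h1 : q.length ≤ T.depth u := hu.1
    omega
  have hss : { u : T.V | T.OccursAtNode q u } ⊂ { u : T.V | T.OccursAtNode p u } :=
    (Set.ssubset_iff_of_subset hsub).mpr ⟨T.par^[d] u, hv, hvq⟩
  exact ⟨Set.ncard_lt_ncard hss (Set.toFinite _), hss.ne'⟩
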